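/- Let Σ be a singleton alphabet and 𝕄 = (ℕ,+,val,0) the timed valuation monoid with the usual addition of natural numbers and val(((m₁,m₁'),t₁)…((mₙ,mₙ'),tₙ)) = m₁'·…·mₙ'. Let r : 𝕋Σ⁺ → ℕ be the constant quantitative timed language with r(w) = 1 for all w. Then r is recognizable over 𝕄, and for every timed language 𝓛 ⊆ 𝕋Σ⁺ that is recognizable but not unambiguously recognizable, the quantitative timed language r ∩ 𝓛 belongs to N(Σ,𝕄) but is not recognizable over 𝕄 (so r ∩ 𝓛 ∈ N(Σ,𝕄) \ Rec(Σ,𝕄)). -/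

import Mathlib

open scoped NNReal Classical

/-! # Core definitions: timed automata and weighted timed automata -/

/-- Comparison operators ⋈ ∈ {<, ≤, =, ≥, >}. -/
inductive Cmp : Type
  | lt | le | eq | ge | gt
  deriving DecidableEq

/-- Evaluation of a comparison `r ⋈ c` for `r ∈ ℝ≥0` and `c ∈ ℕ`. -/
def Cmp.eval : Cmp → ℝ≥0 → ℕ → Prop
  | .lt, r, c => r < (c : ℝ≥0)
  | .le, r, c => r ≤ (c : ℝ≥0)
  | .eq, r, c => r = (c : ℝ≥0)
  | .ge, r, c => (c : ℝ≥0) ≤ r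
  | .gt, r, c => (c : ℝ≥0) < r

/-- Clock constraints over a set `C` of clocks: `True` or conjunctions of `x ⋈ c`. -/
inductive ClockConstraint (C : Type) : Type
  | tt : ClockConstraint C
  | atom : C → Cmp → ℕ → ClockConstraint C
  | conj : ClockConstraint C → ClockConstraint C → ClockConstraint C

/-- A clock valuation assigns a non-negative real to each clock. -/
def ClockVal (C : Type) : Type := C → ℝ≥0

/-- Satisfaction of clock constraints. -/
def ClockConstraint.Sat {C : Type} (ν : ClockVal C) : ClockConstraint C → Prop
  | .tt => True
  | .atom x op c => op.eval (ν x) c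
  | .conj φ ψ => φ.Sat ν ∧ ψ.Sat ν

/-- `ν + t`: add `t` to every clock. -/
def ClockVal.add {C : Type} (ν : ClockVal C) (t : ℝ≥0) : ClockVal C := fun x => ν x + t

/-- `ν[Λ := 0]`: reset the clocks in `Λ` to `0`. -/
noncomputable def ClockVal.reset {C : Type} (ν : ClockVal C) (Λ : Set C) : ClockVal C :=
  fun x => if x ∈ Λ then 0 else ν x

/-- The clock valuation assigning `0` to every clock. -/
def ClockVal.zero {C : Type} : ClockVal C := fun _ => 0

/-- An edge of a timed automaton: an element of `L × Σ × Φ(C) × 2^C × L`. -/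
structure Edge (L A C : Type) : Type where
  src : L
  label : A
  guard : ClockConstraint C
  reset : Set C
  dst : L

/-- A timed automaton over the alphabet `A`. -/
structure TimedAutomaton (A : Type) : Type 1 where
  L : Type
  C : Type
  finL : Finite L
  finC : Finite C
  I : Set L
  F : Set L
  E : Set (Edge L A C)
  finE : E.Finite

/-- A (non-empty finite) timed word over `A`. -/
abbrev TimedWord (A : Type) : Type := { w : List (A × ℝ≥0) // w ≠ [] }

/-- `T.IsRunFrom ℓ ν w es` holds iff `es` is the sequence of edges of a run of `T`
reading the timed word `w`, starting in location `ℓ` with clock valuation `ν`,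
and ending in a final location. -/
def TimedAutomaton.IsRunFrom {A : Type} (T : TimedAutomaton A) :
    T.L → ClockVal T.C → List (A × ℝ≥0) → List (Edge T.L A T.C) → Prop
  | ℓ, _, [], [] => ℓ ∈ T.F
  | ℓ, ν, (a, t) :: w, e :: es =>
      e ∈ T.E ∧ e.src = ℓ ∧ e.label = a ∧ e.guard.Sat (ν.add t) ∧
      T.IsRunFrom e.dst ((ν.add t).reset e.reset) w es
  | _, _, [], _ :: _ => False
  | _, _, _ :: _, [] => False

/-- `Run_T(w)`: the set of runs (identified with their edge sequences) of `T` on `w`. -/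
def TimedAutomaton.RunOn {A : Type} (T : TimedAutomaton A) (w : TimedWord A) :
    Set (List (Edge T.L A T.C)) :=
  { es | ∃ ℓ₀ ∈ T.I, T.IsRunFrom ℓ₀ ClockVal.zero w.1 es }

/-- `L(T)`: the timed language accepted by `T`. -/
def TimedAutomaton.Lang {A : Type} (T : TimedAutomaton A) : Set (TimedWord A) :=
  { w | (T.RunOn w).Nonempty }

/-- A timed automaton is unambiguous if every timed word has at most one run. -/
def TimedAutomaton.Unambiguous {A : Type} (T : TimedAutomaton A) : Prop :=
  ∀ w : TimedWord A, (T.RunOn w).Subsingleton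

/-- A timed automaton is deterministic if it has a single initial location and the guards of
any two distinct edges with the same source and label are jointly unsatisfiable. -/
def TimedAutomaton.Deterministic {A : Type} (T : TimedAutomaton A) : Prop :=
  (∃ ℓ, T.I = {ℓ}) ∧
  ∀ e₁ ∈ T.E, ∀ e₂ ∈ T.E, e₁.src = e₂.src → e₁.label = e₂.label → e₁ ≠ e₂ →
    ∀ ν : ClockVal T.C, ¬ (e₁.guard.Sat ν ∧ e₂.guard.Sat ν)

/-- A timed automaton is sequential if it has a single initial location and any two edges
with the same source and label are equal. -/
def TimedAutomaton.Sequential {A : Type} (T : TimedAutomaton A) : Prop :=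
  (∃ ℓ, T.I = {ℓ}) ∧
  ∀ e₁ ∈ T.E, ∀ e₂ ∈ T.E, e₁.src = e₂.src → e₁.label = e₂.label → e₁ = e₂

/-- A timed language is recognizable by a timed automaton satisfying `P`. -/
def TLRecognizableBy {A : Type} (P : TimedAutomaton A → Prop) (𝓛 : Set (TimedWord A)) : Prop :=
  ∃ T : TimedAutomaton A, P T ∧ T.Lang = 𝓛

/-- A weighted timed automaton over the alphabet `A` and (the domain `M` of) a timed
valuation monoid: a timed automaton together with weights on locations and edges.
The timed valuation monoid itself is given by an `AddCommMonoid M` instance together with a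
timed valuation function `val : List ((M × M) × ℝ≥0) → M` (only its values on non-empty
lists, i.e. on `𝕋(M×M)⁺`, ever matter). -/
structure WTA (A M : Type) extends TimedAutomaton A where
  wtL : L → M
  wtE : Edge L A C → M

/-- The timed word `wt♯(ρ) ∈ 𝕋(M×M)⁺` associated with a run: the `i`-th letter is
`((wt(ℓ_{i-1}), wt(e_i)), t_i)`, where `ℓ_{i-1}` is the source location of edge `e_i`. -/
def WTA.runWord {A M : Type} (W : WTA A M) (w : List (A × ℝ≥0))
    (es : List (Edge W.L A W.C)) : List ((M × M) × ℝ≥0) :=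
  List.zipWith (fun (p : A × ℝ≥0) e => ((W.wtL e.src, W.wtE e), p.2)) w es

/-- The behavior `‖W‖ : 𝕋A⁺ → M` of a WTA: `‖W‖(w) = Σ (val(wt♯(ρ)) : ρ ∈ Run_W(w))`,
the empty sum being `0` (the monoid unit `𝟘`). -/
noncomputable def WTA.behavior {A M : Type} [AddCommMonoid M]
    (val : List ((M × M) × ℝ≥0) → M) (W : WTA A M) (w : TimedWord A) : M :=
  ∑ᶠ es ∈ W.toTimedAutomaton.RunOn w, val (W.runWord w.1 es)

/-- A quantitative timed language `r : 𝕋A⁺ → M` is recognizable over the timed valuation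
monoid `(M, +, val, 𝟘)` by a WTA whose underlying timed automaton satisfies `P`. -/
def QTLRecognizableBy {A M : Type} [AddCommMonoid M] (val : List ((M × M) × ℝ≥0) → M)
    (P : TimedAutomaton A → Prop) (r : TimedWord A → M) : Prop :=
  ∃ W : WTA A M, P W.toTimedAutomaton ∧ ∀ w, W.behavior val w = r w

/-- Recognizability (no restriction on the underlying timed automaton). -/
def QTLRecognizable {A M : Type} [AddCommMonoid M] (val : List ((M × M) × ℝ≥0) → M)
    (r : TimedWord A → M) : Prop :=
  ∃ W : WTA A M, ∀ w, W.behavior val w = r w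

/-- Renaming of timed words along `h : Γ → A`. -/
def mapTimedWord {Γ A : Type} (h : Γ → A) (v : TimedWord Γ) : TimedWord A :=
  ⟨v.1.map (fun p => (h p.1, p.2)), by
    cases v with
    | mk l hl => cases l with
      | nil => exact absurd rfl hl
      | cons p l => simp⟩

/-- `h(r)(w) = Σ (r(v) : v ∈ 𝕋Γ⁺, h(v) = w)` (a finite sum when `Γ` is finite). -/
noncomputable def pushQTL {Γ A M : Type} [AddCommMonoid M] (h : Γ → A)
    (r : TimedWord Γ → M) (w : TimedWord A) : M :=
  ∑ᶠ v ∈ { v : TimedWord Γ | mapTimedWord h v = w }, r v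

/-- `(val ∘ g)(w) = val((g(a₁),t₁)…(g(aₙ),tₙ))`. -/
def valComp {A M : Type} (val : List ((M × M) × ℝ≥0) → M) (g : A → M × M)
    (w : TimedWord A) : M :=
  val (w.1.map (fun p => (g p.1, p.2)))

/-- The intersection `r ∩ 𝓛` of a quantitative timed language with a timed language. -/
noncomputable def interQTL {A M : Type} [Zero M] (r : TimedWord A → M)
    (𝓛 : Set (TimedWord A)) (w : TimedWord A) : M :=
  if w ∈ 𝓛 then r w else 0

/-- Membership in the Nivat class `N^P(A, 𝕄)`: `𝕃 = h((val ∘ g) ∩ 𝓛)` for some alphabet `Γ`,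
maps `h : Γ → A`, `g : Γ → M × M` and a timed language `𝓛` recognizable by a timed
automaton satisfying `P`. -/
def NivatMem {A M : Type} [AddCommMonoid M] (val : List ((M × M) × ℝ≥0) → M)
    (P : ∀ {Γ : Type}, TimedAutomaton Γ → Prop) (𝕃 : TimedWord A → M) : Prop :=
  ∃ (Γ : Type) (_ : Finite Γ) (_ : Nonempty Γ) (h : Γ → A) (g : Γ → M × M)
    (𝓛 : Set (TimedWord Γ)),
      TLRecognizableBy P 𝓛 ∧ ∀ w, 𝕃 w = pushQTL h (interQTL (valComp val g) 𝓛) w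

/-- Membership in the class `H^P(A, 𝕄)`: `𝕃 = h(r)` for some alphabet `Γ`, `h : Γ → A`
and a quantitative timed language `r` recognizable by a WTA whose underlying timed
automaton satisfies `P`. -/
def HMem {A M : Type} [AddCommMonoid M] (val : List ((M × M) × ℝ≥0) → M)
    (P : ∀ {Γ : Type}, TimedAutomaton Γ → Prop) (𝕃 : TimedWord A → M) : Prop :=
  ∃ (Γ : Type) (_ : Finite Γ) (_ : Nonempty Γ) (h : Γ → A) (r : TimedWord Γ → M),
      QTLRecognizableBy val (fun T => P T) r ∧ ∀ w, 𝕃 w = pushQTL h r w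

/-- Idempotency of a timed valuation monoid. -/
def IsIdempotent (M : Type) [Add M] : Prop := ∀ m : M, m + m = m

/-- Location-independence of a timed valuation function: the value of `val` on a non-empty
timed word over `M × M` depends only on the second components and the time stamps. -/
def LocIndep {M : Type} (val : List ((M × M) × ℝ≥0) → M) : Prop :=
  ∀ l l' : List ((M × M) × ℝ≥0), l ≠ [] →
    l.map (fun p => (p.1.2, p.2)) = l'.map (fun p => (p.1.2, p.2)) → val l = val l'

/-- The timed valuation function `val(((m₁,m₁'),t₁)…((mₙ,mₙ'),tₙ)) = m₁'·…·mₙ'` over the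
timed valuation monoid `(ℕ, +, val, 0)` of Example `Ex:Bad`. -/
def valProd : List ((ℕ × ℕ) × ℝ≥0) → ℕ := fun l => (l.map (fun p => p.1.2)).prod

/-! ## Auxiliary lemmas -/

lemma isRunFrom_length {A : Type} (T : TimedAutomaton A) :
    ∀ (l : List (A × ℝ≥0)) (es : List (Edge T.L A T.C)) (ℓ : T.L) (ν : ClockVal T.C),
      T.IsRunFrom ℓ ν l es → es.length = l.length := by
  intro l
  induction l with
  | nil =>
    intro es ℓ ν h
    cases es with
    | nil => rfl
    | cons e es => exact absurd h (by simp [TimedAutomaton.IsRunFrom])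
  | cons p l ih =>
    intro es ℓ ν h
    obtain ⟨a, t⟩ := p
    cases es with
    | nil => exact absurd h (by simp [TimedAutomaton.IsRunFrom])
    | cons e es =>
      obtain ⟨_, _, _, _, h5⟩ := h
      simpa using ih es _ _ h5

lemma isRunFrom_mem {A : Type} (T : TimedAutomaton A) :
    ∀ (l : List (A × ℝ≥0)) (es : List (Edge T.L A T.C)) (ℓ : T.L) (ν : ClockVal T.C),
      T.IsRunFrom ℓ ν l es → ∀ e ∈ es, e ∈ T.E := by
  intro l
  induction l with
  | nil =>
    intro es ℓ ν h
    cases es with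
    | nil => simp
    | cons e es => exact absurd h (by simp [TimedAutomaton.IsRunFrom])
  | cons p l ih =>
    intro es ℓ ν h
    obtain ⟨a, t⟩ := p
    cases es with
    | nil => exact absurd h (by simp [TimedAutomaton.IsRunFrom])
    | cons e es =>
      obtain ⟨h1, _, _, _, h5⟩ := h
      intro e' he'
      rcases List.mem_cons.1 he' with rfl | he'
      · exact h1
      · exact ih es _ _ h5 e' he'

lemma runOn_finite {A : Type} (T : TimedAutomaton A) (w : TimedWord A) :
    (T.RunOn w).Finite := by
  haveI := T.finE.to_subtype
  refine Set.Finite.subset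
    (Set.Finite.image (List.map Subtype.val)
      (List.finite_length_eq (↥T.E) w.1.length)) ?_
  rintro es ⟨ℓ₀, _, hrun⟩
  have hmem := isRunFrom_mem T w.1 es ℓ₀ ClockVal.zero hrun
  have hlen := isRunFrom_length T w.1 es ℓ₀ ClockVal.zero hrun
  refine ⟨es.attach.map (fun x => ⟨x.1, hmem x.1 x.2⟩), by simpa using hlen, ?_⟩
  simp [List.map_map, Function.comp]

/-- Restriction of a timed automaton to a subset of edges. -/
def TimedAutomaton.restrict {A : Type} (T : TimedAutomaton A)
    (E' : Set (Edge T.L A T.C)) : TimedAutomaton A :=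
  { T with E := T.E ∩ E', finE := T.finE.inter_of_left E' }

lemma isRunFrom_restrict {A : Type} (T : TimedAutomaton A)
    (E' : Set (Edge T.L A T.C)) :
    ∀ (l : List (A × ℝ≥0)) (es : List (Edge T.L A T.C)) (ℓ : T.L) (ν : ClockVal T.C),
      (T.restrict E').IsRunFrom ℓ ν l es ↔
        T.IsRunFrom ℓ ν l es ∧ ∀ e ∈ es, e ∈ E' := by
  intro l
  induction l with
  | nil =>
    intro es ℓ ν
    cases es with
    | nil => simp [TimedAutomaton.IsRunFrom, TimedAutomaton.restrict]; rfl
    | cons e es => simp [TimedAutomaton.IsRunFrom]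
  | cons p l ih =>
    intro es ℓ ν
    obtain ⟨a, t⟩ := p
    cases es with
    | nil => simp [TimedAutomaton.IsRunFrom]
    | cons e es =>
      show (e ∈ T.E ∩ E' ∧ _ ∧ _ ∧ _ ∧ (T.restrict E').IsRunFrom _ _ _ _) ↔ _
      erw [ih]
      constructor
      · rintro ⟨⟨h1, h1'⟩, h2, h3, h4, h5, h6⟩
        refine ⟨⟨h1, h2, h3, h4, h5⟩, ?_⟩
        intro e' he'
        rcases List.mem_cons.1 he' with rfl | he'
        · exact h1'
        · exact h6 e' he'
      · rintro ⟨⟨h1, h2, h3, h4, h5⟩, h6⟩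
        exact ⟨⟨h1, h6 e List.mem_cons_self⟩, h2, h3, h4, h5,
          fun e' he' => h6 e' (List.mem_cons_of_mem e he')⟩

lemma runOn_restrict {A : Type} (T : TimedAutomaton A)
    (E' : Set (Edge T.L A T.C)) (w : TimedWord A) :
    (T.restrict E').RunOn w = {es ∈ T.RunOn w | ∀ e ∈ es, e ∈ E'} := by
  ext es
  constructor
  · rintro ⟨ℓ₀, hℓ₀, hrun⟩
    have hrun := (isRunFrom_restrict T E' w.1 es ℓ₀ _).1 hrun
    exact ⟨⟨ℓ₀, hℓ₀, hrun.1⟩, hrun.2⟩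
  · rintro ⟨⟨ℓ₀, hℓ₀, hrun⟩, hE'⟩
    exact ⟨ℓ₀, hℓ₀, (isRunFrom_restrict T E' w.1 es ℓ₀ _).2 ⟨hrun, hE'⟩⟩

lemma valProd_runWord {A : Type} (W : WTA A ℕ) :
    ∀ (l : List (A × ℝ≥0)) (es : List (Edge W.L A W.C)), es.length = l.length →
      valProd (W.runWord l es) = (es.map W.wtE).prod := by
  intro l
  induction l with
  | nil =>
    intro es h
    cases es with
    | nil => rfl
    | cons e es => simp at h
  | cons p l ih =>
    intro es h
    cases es with
    | nil => simp at h
    | cons e es =>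
      have := ih es (by simpa using h)
      simp only [WTA.runWord, List.zipWith_cons_cons, valProd, List.map_cons,
        List.prod_cons] at this ⊢
      rw [show ((List.zipWith (fun (p : A × ℝ≥0) e =>
        ((W.wtL e.src, W.wtE e), p.2)) l es).map (fun p => p.1.2)).prod
          = (es.map W.wtE).prod from this]

/-- A one-location WTA with all weights `1`. -/
def oneWTA (S : Type) [Finite S] : WTA S ℕ where
  L := Unit
  C := Unit
  finL := inferInstance
  finC := inferInstance
  I := Set.univ
  F := Set.univ
  E := Set.range (fun a : S => Edge.mk () a .tt ∅ ())
  finE := Set.finite_range _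
  wtL := fun _ => 1
  wtE := fun _ => 1

/-- Example: failure of closure under intersection in the
non-idempotent case. Let `Σ` be a singleton alphabet and `𝕄 = (ℕ, +, val, 0)` with
`val` the product of the second components. The constant quantitative timed language
`r ≡ 1` is recognizable over `𝕄`, and for every timed language `𝓛 ⊆ 𝕋Σ⁺` which is
recognizable but not unambiguously recognizable, `r ∩ 𝓛 ∈ N(Σ,𝕄) \ Rec(Σ,𝕄)`. -/
theorem interQTL_in_Nivat_not_recognizable {S : Type} [Finite S] [Nonempty S]
    (hsing : ∀ x y : S, x = y) :
    QTLRecognizable valProd (fun _ : TimedWord S => (1 : ℕ)) ∧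
    ∀ 𝓛 : Set (TimedWord S),
      TLRecognizableBy (fun _ => True) 𝓛 →
      ¬ TLRecognizableBy TimedAutomaton.Unambiguous 𝓛 →
      NivatMem valProd (fun {_} _ => True) (interQTL (fun _ => (1 : ℕ)) 𝓛) ∧
      ¬ QTLRecognizable valProd (interQTL (fun _ => (1 : ℕ)) 𝓛) := by
  constructor
  · -- r ≡ 1 is recognizable
    classical
    refine ⟨oneWTA S, ?_⟩
    intro w
    set W : WTA S ℕ := oneWTA S with hW
    have hrun : ∀ (l : List (S × ℝ≥0)) (ν : ClockVal Unit)
        (es : List (Edge Unit S Unit)),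
        W.toTimedAutomaton.IsRunFrom () ν l es ↔
          es = l.map (fun p => Edge.mk () p.1 .tt ∅ ()) := by
      intro l
      induction l with
      | nil =>
        intro ν es
        cases es with
        | nil => simp [TimedAutomaton.IsRunFrom, show () ∈ W.F from trivial]; exact trivial
        | cons e es => simp [TimedAutomaton.IsRunFrom]
      | cons p l ih =>
        intro ν es
        obtain ⟨a, t⟩ := p
        cases es with
        | nil => simp [TimedAutomaton.IsRunFrom]
        | cons e es =>
          show (e ∈ W.E ∧ _ ∧ _ ∧ _ ∧ W.toTimedAutomaton.IsRunFrom e.dst _ _ _) ↔ _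
          erw [show e.dst = () from rfl, ih]
          constructor
          · rintro ⟨⟨a', rfl⟩, -, h3, -, h5⟩
            have h3' : a' = a := h3
            subst h3'
            rw [List.map_cons, h5]
          · intro h
            rw [List.map_cons] at h
            injection h with h1 h2
            subst h1
            exact ⟨⟨a, rfl⟩, rfl, rfl, trivial, h2⟩
    have hRunOn : W.toTimedAutomaton.RunOn w
        = {w.1.map (fun p => Edge.mk () p.1 .tt ∅ ())} := by
      ext es
      constructor
      · rintro ⟨ℓ₀, -, h⟩
        exact (hrun w.1 _ es).1 h
      · rintro rfl
        exact ⟨(), trivial, (hrun w.1 _ _).2 rfl⟩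
    erw [WTA.behavior, hRunOn, finsum_mem_singleton,
      valProd_runWord W w.1 _ (by erw [List.length_map])]
    apply List.prod_eq_one
    intro x hx
    obtain ⟨e, -, rfl⟩ := List.mem_map.1 hx
    rfl
  · intro 𝓛 h𝓛 h𝓛na
    constructor
    · -- Nivat membership
      obtain ⟨T, -, hT⟩ := h𝓛
      refine ⟨S, ‹_›, ‹_›, id, fun _ => (1, 1), 𝓛, ⟨T, trivial, hT⟩, ?_⟩
      intro w
      have hmap : ∀ v : TimedWord S, mapTimedWord (id : S → S) v = v := by
        intro v
        apply Subtype.ext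
        simp [mapTimedWord]
      have hfib : { v : TimedWord S | mapTimedWord (id : S → S) v = w } = {w} := by
        ext v; simp [hmap]
      rw [pushQTL, hfib, finsum_mem_singleton, interQTL, interQTL]
      split
      · symm
        simp only [valComp, valProd, List.map_map]
        apply List.prod_eq_one
        intro x hx
        obtain ⟨p, -, rfl⟩ := List.mem_map.1 hx
        rfl
      · rfl
    · -- not recognizable
      rintro ⟨W, hW⟩
      apply h𝓛na
      set E' : Set (Edge W.L S W.C) := {e | W.wtE e ≠ 0} with hE'
      refine ⟨W.toTimedAutomaton.restrict E', ?_, ?_⟩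
      · -- Unambiguous
        intro w
        have hbeh := hW w
        have hfin := runOn_finite W.toTimedAutomaton w
        rw [WTA.behavior, finsum_mem_eq_finite_toFinset_sum _ hfin] at hbeh
        intro a ha b hb
        by_contra hab
        rw [runOn_restrict] at ha hb
        have hwt : ∀ es ∈ W.toTimedAutomaton.RunOn w, (∀ e ∈ es, e ∈ E') →
            1 ≤ valProd (W.runWord w.1 es) := by
          rintro es ⟨ℓ₀, -, hrun⟩ hE
          rw [valProd_runWord W w.1 es (isRunFrom_length _ _ _ _ _ hrun)]
          rcases Nat.eq_zero_or_pos ((es.map W.wtE).prod) with h0 | h1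
          · rw [List.prod_eq_zero_iff] at h0
            obtain ⟨e, he, he0⟩ := List.mem_map.1 h0
            exact absurd he0 (hE e he)
          · exact h1
        have ha' : a ∈ hfin.toFinset := hfin.mem_toFinset.2 ha.1
        have hb' : b ∈ hfin.toFinset := hfin.mem_toFinset.2 hb.1
        have hsub : ({a, b} : Finset (List (Edge W.L S W.C))) ⊆ hfin.toFinset := by
          intro x hx
          rcases Finset.mem_insert.1 hx with rfl | hx
          · exact ha'
          · rw [Finset.mem_singleton.1 hx]; exact hb'
        have h2 : 2 ≤ ∑ es ∈ hfin.toFinset, valProd (W.runWord w.1 es) := by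
          calc (2 : ℕ) ≤ valProd (W.runWord w.1 a) + valProd (W.runWord w.1 b) :=
                Nat.add_le_add (hwt a ha.1 ha.2) (hwt b hb.1 hb.2)
            _ = ∑ es ∈ ({a, b} : Finset _), valProd (W.runWord w.1 es) :=
                (Finset.sum_pair (f := fun es => valProd (W.runWord w.1 es)) hab).symm
            _ ≤ _ := Finset.sum_le_sum_of_subset hsub
        rw [hbeh] at h2
        simp only [interQTL] at h2
        split at h2 <;> omega
      · -- Lang = 𝓛
        ext w
        have hbeh := hW w
        have hfin := runOn_finite W.toTimedAutomaton w
        rw [WTA.behavior, finsum_mem_eq_finite_toFinset_sum _ hfin] at hbeh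
        have hwt : ∀ es ∈ W.toTimedAutomaton.RunOn w,
            (valProd (W.runWord w.1 es) ≠ 0 ↔ ∀ e ∈ es, e ∈ E') := by
          rintro es ⟨ℓ₀, -, hrun⟩
          rw [valProd_runWord W w.1 es (isRunFrom_length _ _ _ _ _ hrun)]
          rw [Ne, List.prod_eq_zero_iff]
          constructor
          · intro h0 e he
            exact fun he0 => h0 (List.mem_map.2 ⟨e, he, he0⟩)
          · intro hE h0
            obtain ⟨e, he, he0⟩ := List.mem_map.1 h0
            exact hE e he he0
        constructor
        · rintro ⟨es, hes⟩
          rw [runOn_restrict] at hes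
          by_contra hw
          have h0 : interQTL (fun _ => (1 : ℕ)) 𝓛 w = 0 := by
            rw [interQTL, if_neg hw]
          rw [h0] at hbeh
          have := (Finset.sum_eq_zero_iff.1 hbeh) es (hfin.mem_toFinset.2 hes.1)
          exact ((hwt es hes.1).2 hes.2) this
        · intro hw
          have h1 : interQTL (fun _ => (1 : ℕ)) 𝓛 w = 1 := by
            rw [interQTL, if_pos hw]
          rw [h1] at hbeh
          have : ∃ es ∈ hfin.toFinset, valProd (W.runWord w.1 es) ≠ 0 := by
            by_contra hno
            push_neg at hno
            rw [Finset.sum_eq_zero hno] at hbeh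
            exact absurd hbeh (by omega)
          obtain ⟨es, hes, hne⟩ := this
          rw [hfin.mem_toFinset] at hes
          refine ⟨es, ?_⟩
          rw [runOn_restrict]
          exact ⟨hes, (hwt es hes).1 hne⟩
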